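/- Let H₂(z) = z² − 24z + 96 and let P(z) = (3/2)z⁴ − 70z³ + 1056z² − 5760z + 9216. Then ∫₀^∞ P(z)·H₂(z)·z·e^{-z/4} dz = 576 · ∫₀^∞ H₂(z)²·z·e^{-z/4} dz. In other words, the coefficient of H₂ in the orthogonal expansion of P with respect to the weight z·e^{-z/4} on (0,∞) equals B₂ = 576. -/

import Mathlib

open MeasureTheory

private noncomputable def cL : ℕ → ℝ
  | 1 => 884736 | 2 => -774144 | 3 => 248832 | 4 => -37824
  | 5 => 2880 | 6 => -106 | 7 => 3/2 | _ => 0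

private noncomputable def cR : ℕ → ℝ
  | 1 => 9216 | 2 => -4608 | 3 => 768 | 4 => -48 | 5 => 1 | _ => 0

lemma intgB2 (n : ℕ) :
    IntegrableOn (fun z : ℝ => z ^ n * Real.exp (-z / 4)) (Set.Ioi 0) := by
  have h := integrableOn_rpow_mul_exp_neg_mul_rpow
    (by exact neg_one_lt_zero.trans_le (Nat.cast_nonneg n)) (by norm_num : (0:ℝ) < 1)
    (by norm_num : (0:ℝ) < 1/4)
  refine h.congr_fun (fun x hx => ?_) measurableSet_Ioi
  dsimp only
  rw [Real.rpow_one, Real.rpow_natCast]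
  ring_nf

lemma keyB2 (n : ℕ) :
    ∫ z in Set.Ioi (0:ℝ), z ^ n * Real.exp (-z / 4)
      = (Nat.factorial n : ℝ) * 4 ^ (n + 1) := by
  have h := Real.integral_rpow_mul_exp_neg_mul_Ioi
    (by positivity : (0:ℝ) < (n:ℝ) + 1) (by norm_num : (0:ℝ) < 1/4)
  rw [show ((n:ℝ) + 1 - 1) = (n:ℝ) by ring] at h
  have h2 : ∫ z in Set.Ioi (0:ℝ), z ^ n * Real.exp (-z / 4)
      = ∫ t in Set.Ioi (0:ℝ), t ^ (n:ℝ) * Real.exp (-(1/4 * t)) := by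
    refine setIntegral_congr_fun measurableSet_Ioi (fun x hx => ?_)
    rw [Real.rpow_natCast]
    ring_nf
  rw [h2, h, Real.Gamma_nat_eq_factorial n,
    show (1/(1/4):ℝ) = 4 by norm_num,
    show ((n:ℝ)+1) = ((n+1 : ℕ):ℝ) by push_cast; ring,
    Real.rpow_natCast, mul_comm]

theorem projection_constant_B2
    (H₂ P : ℝ → ℝ)
    (hH : ∀ z : ℝ, H₂ z = z ^ 2 - 24 * z + 96)
    (hP : ∀ z : ℝ, P z = 3 / 2 * z ^ 4 - 70 * z ^ 3 + 1056 * z ^ 2 - 5760 * z + 9216) :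
    ∫ z in Set.Ioi (0 : ℝ), P z * H₂ z * z * Real.exp (-z / 4)
      = 576 * ∫ z in Set.Ioi (0 : ℝ), H₂ z ^ 2 * z * Real.exp (-z / 4) := by
  have hL : ∫ z in Set.Ioi (0 : ℝ), P z * H₂ z * z * Real.exp (-z / 4)
      = ∫ z in Set.Ioi (0:ℝ), ∑ i ∈ Finset.range 8,
        cL i * (z ^ i * Real.exp (-z / 4)) := by
    refine setIntegral_congr_fun measurableSet_Ioi (fun z _ => ?_)
    rw [hP, hH]
    simp only [Finset.sum_range_succ, Finset.sum_range_zero, cL]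
    ring
  have hR : ∫ z in Set.Ioi (0 : ℝ), H₂ z ^ 2 * z * Real.exp (-z / 4)
      = ∫ z in Set.Ioi (0:ℝ), ∑ i ∈ Finset.range 8,
        cR i * (z ^ i * Real.exp (-z / 4)) := by
    refine setIntegral_congr_fun measurableSet_Ioi (fun z _ => ?_)
    rw [hH]
    simp only [Finset.sum_range_succ, Finset.sum_range_zero, cR]
    ring
  rw [hL, hR,
    integral_finset_sum _ (fun i _ => ((intgB2 i).const_mul _)),
    integral_finset_sum _ (fun i _ => ((intgB2 i).const_mul _))]
  simp only [integral_const_mul, keyB2]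
  simp only [Finset.sum_range_succ, Finset.sum_range_zero, cL, cR]
  norm_num [Nat.factorial]
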